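/- Let G be a finite group acting by automorphisms on a torsion-free group π. Then the family 𝒢 of subgroups of the semidirect product π⋊G that are conjugate to a subgroup of 1×G equals the family of all finite subgroups of π⋊G if and only if, for every subgroup H ≤ G, every 1-cocycle φ : H → π is principal (i.e., H¹(H; π) = {1} for all H ≤ G). -/
import Mathlib

section Aux
open SemidirectProduct
variable {π G : Type} [Group π] [Group G] {φ : G →* MulAut π}

lemma sdp_ext {a b : π ⋊[φ] G} (h1 : a.left = b.left) (h2 : a.right = b.right) : a = b := by
  cases a; cases b; simp_all

lemma sdp_mem_inr_range {y : π ⋊[φ] G} :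
    y ∈ (inr : G →* π ⋊[φ] G).range ↔ y.left = 1 := by
  constructor
  · rintro ⟨g, rfl⟩; simp
  · intro h; exact ⟨y.right, sdp_ext (by simp [h]) (by simp)⟩

lemma sdp_conj_left (x : π ⋊[φ] G) (k : π ⋊[φ] G) :
    (x * k * x⁻¹).left
      = x.left * φ x.right k.left * φ (x.right * k.right * x.right⁻¹) x.left⁻¹ := by
  rw [mul_left, mul_left, inv_left, mul_right, map_mul, map_mul, ← MulAut.mul_apply, ← map_mul]

end Aux


/-- The family `𝒢` of subgroups of the semidirect product `π ⋊[φ] G` consisting of the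
subgroups which are conjugate (in `π ⋊[φ] G`) to a subgroup of the canonical copy
`1 × G` of `G`. -/
def subConjFamily {π G : Type} [Group π] [Group G] (φ : G →* MulAut π) :
    Set (Subgroup (π ⋊[φ] G)) :=
  {K : Subgroup (π ⋊[φ] G) | ∃ x : π ⋊[φ] G,
    Subgroup.map (MulAut.conj x).toMonoidHom K ≤
      (SemidirectProduct.inr : G →* π ⋊[φ] G).range}

/-- **Proposition.** Let `G` be a finite group acting by automorphisms (via `φ`) on a
torsion-free group `π`.  Then `𝒢` equals the family of all finite subgroups of `π ⋊ G`
if and only if, for every subgroup `H ≤ G`, every `1`-cocycle `c : H → π`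
(i.e. `c (g h) = c g • (g • c h)`) is principal (i.e. `c g = α * (g • α)⁻¹` for some fixed
`α ∈ π`); that is, iff `H¹(H; π) = {1}` for all `H ≤ G`. -/
theorem subConjFamily_eq_finite_iff_H1_trivial (π G : Type) [Group π] [Group G] [Finite G]
    (φ : G →* MulAut π) (htf : ∀ a : π, a ≠ 1 → ¬ IsOfFinOrder a) :
    (∀ K : Subgroup (π ⋊[φ] G), K ∈ subConjFamily φ ↔ Finite K) ↔
    (∀ H : Subgroup G, ∀ c : H → π,
      (∀ g h : H, c (g * h) = c g * φ (g : G) (c h)) →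
      ∃ α : π, ∀ g : H, c g = α * (φ (g : G) α)⁻¹) := by
  constructor
  · -- 𝒢 = finite subgroups ⟹ H¹ trivial
    intro hfam H c hc
    -- The graph of the cocycle is a section homomorphism
    let s : H →* π ⋊[φ] G := MonoidHom.mk' (fun h => ⟨c h, (h : G)⟩)
      (fun g h => SemidirectProduct.ext (by simp [hc g h]) (by simp))
    have hfin : Finite s.range :=
      Finite.of_surjective s.rangeRestrict s.rangeRestrict_surjective
    obtain ⟨x, hx⟩ := (hfam s.range).2 hfin
    -- the conjugate of each s h lies in 1 × G, hence its left component is 1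
    have key : ∀ h : H,
        x.left * φ x.right (c h) * φ (x.right * (h : G) * x.right⁻¹) x.left⁻¹ = 1 := by
      intro h
      have hmem : (MulAut.conj x).toMonoidHom (s h) ∈
          Subgroup.map (MulAut.conj x).toMonoidHom s.range :=
        Subgroup.mem_map.mpr ⟨s h, ⟨h, rfl⟩, rfl⟩
      have := sdp_mem_inr_range.mp (hx hmem)
      rwa [MulEquiv.coe_toMonoidHom, MulAut.conj_apply, sdp_conj_left] at this
    refine ⟨φ x.right⁻¹ x.left⁻¹, fun h => ?_⟩
    have h1 := key h
    have hcomp : ∀ (a b : G) (y : π), φ a (φ b y) = φ (a * b) y := fun a b y => by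
      rw [map_mul, MulAut.mul_apply]
    have h2 : φ x.right (c h) = x.left⁻¹ * (φ (x.right * (h : G) * x.right⁻¹) x.left⁻¹)⁻¹ := by
      rw [mul_eq_one_iff_eq_inv] at h1
      exact eq_inv_mul_iff_mul_eq.mpr h1
    apply (φ x.right).injective
    rw [h2]
    rw [map_mul (φ x.right), hcomp, mul_inv_cancel, map_one, MulAut.one_apply,
      map_inv (φ x.right), hcomp, hcomp]
  · -- H¹ trivial ⟹ 𝒢 = finite subgroups
    intro hH1 K
    constructor
    · rintro ⟨x, hx⟩
      -- K embeds into G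
      have hinj : Function.Injective (fun k : K => (x * (k : π ⋊[φ] G) * x⁻¹).right) := by
        intro k₁ k₂ h
        have hmem : ∀ k : K, (x * (k : π ⋊[φ] G) * x⁻¹).left = 1 := fun k =>
          sdp_mem_inr_range.mp (hx (Subgroup.mem_map.mpr ⟨k, k.2, rfl⟩))
        have heq : x * (k₁ : π ⋊[φ] G) * x⁻¹ = x * (k₂ : π ⋊[φ] G) * x⁻¹ :=
          sdp_ext ((hmem k₁).trans (hmem k₂).symm) h
        have : (k₁ : π ⋊[φ] G) = k₂ := by
          have := mul_right_cancel heq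
          exact mul_left_cancel this
        exact Subtype.ext this
      exact Finite.of_injective _ hinj
    · intro hKfin
      -- K meets π trivially
      have huniq : ∀ k ∈ K, k.right = 1 → k = 1 := by
        intro k hk hk1
        have hfo : IsOfFinOrder k := K.subtype.isOfFinOrder (isOfFinOrder_of_finite (⟨k, hk⟩ : K))
        obtain ⟨n, hn, hpow⟩ := isOfFinOrder_iff_pow_eq_one.mp hfo
        have hkeq : k = SemidirectProduct.inl k.left :=
          sdp_ext (by simp) (by simp [hk1])
        have hlpow : k.left ^ n = 1 := by
          apply SemidirectProduct.inl_injective (φ := φ)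
          rw [map_pow, ← hkeq, hpow, map_one]
        have hl1 : k.left = 1 := by
          by_contra hne
          exact htf k.left hne (isOfFinOrder_iff_pow_eq_one.mpr ⟨n, hn, hlpow⟩)
        rw [hkeq, hl1, map_one]
      -- right components determine elements of K
      have hinj : ∀ k₁ ∈ K, ∀ k₂ ∈ K, k₁.right = k₂.right → k₁ = k₂ := by
        intro k₁ h₁ k₂ h₂ hr
        have hm : k₁ * k₂⁻¹ ∈ K := K.mul_mem h₁ (K.inv_mem h₂)
        have : k₁ * k₂⁻¹ = 1 := huniq _ hm (by simp [hr])
        exact mul_inv_eq_one.mp this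
      -- the image subgroup and the cocycle
      set H : Subgroup G := K.map SemidirectProduct.rightHom with hH
      have hex : ∀ h : H, ∃ k : π ⋊[φ] G, k ∈ K ∧ k.right = (h : G) := by
        intro h
        obtain ⟨k, hk, hkr⟩ := Subgroup.mem_map.mp h.2
        exact ⟨k, hk, hkr⟩
      choose kf hkmem hkr using hex
      have hkf_eq : ∀ k ∈ K, ∀ h : H, k.right = (h : G) → k = kf h := by
        intro k hk h hr
        exact hinj k hk (kf h) (hkmem h) (hr.trans (hkr h).symm)
      have hc : ∀ g h : H, (kf (g * h)).left = (kf g).left * φ (g : G) ((kf h).left) := by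
        intro g h
        have hmul : kf g * kf h = kf (g * h) := by
          refine hkf_eq _ (K.mul_mem (hkmem g) (hkmem h)) (g * h) ?_
          rw [SemidirectProduct.mul_right, hkr g, hkr h]; rfl
        rw [← hmul, SemidirectProduct.mul_left, hkr g]
      obtain ⟨α, hα⟩ := hH1 H (fun h => (kf h).left) hc
      refine ⟨SemidirectProduct.inl α⁻¹, fun y hy => ?_⟩
      obtain ⟨k, hk, rfl⟩ := Subgroup.mem_map.mp hy
      rw [MulEquiv.coe_toMonoidHom, MulAut.conj_apply, sdp_mem_inr_range, sdp_conj_left]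
      have hkH : k.right ∈ H := Subgroup.mem_map.mpr ⟨k, hk, rfl⟩
      have hkl : k.left = α * (φ k.right α)⁻¹ := by
        have h1 := hα ⟨k.right, hkH⟩
        rw [hkf_eq k hk ⟨k.right, hkH⟩ rfl, hkr ⟨k.right, hkH⟩]
        exact h1
      simp [hkl, mul_assoc]
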